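/- (a) A probability measure μ on X̂* is an ETIS state of the SSM if and only if γ^{-1}_*μ is an ETIS state on X̂*_e × S (with the SSM dynamics acting on the first factor and trivially on the second, and the diagonal shift). (b) Every ETIS state μ̃ on X̂*_e × S of density ρ̂ has the form μ̃(dn dσ) = μ_σ(dn) λ(dσ), where λ is an ergodic shift-invariant probability measure on S, the μ_σ are stationary probability measures on X̂*_e satisfying μ_{τσ} = τ_*μ_σ, and, if λ has density κ, then λ-almost every μ_σ has density ρ̂ − κ. -/

import Mathlib

open MeasureTheory Filter
open scoped ENNReal

attribute [local instance] Classical.propDecidable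

noncomputable section
namespace FSSEPPaper

/-- Configuration space of the F-SSEP. -/
abbrev X : Type := ℤ → Bool
/-- Configuration space of the SSM (stack model). -/
abbrev XS : Type := ℤ → ℕ
/-- Parity sequences. -/
abbrev PS : Type := ℤ → Bool

/-- The `(m+1)`-st binary digit of `x`. -/
def rbit (m : ℕ) (x : ℝ) : Bool := decide (⌊x * 2 ^ (m + 1)⌋ % 2 = 1)

/-- The i.i.d. fair-coin product measure on `ℤ → Bool`, realized through the binary
digits of a uniform random number in `(0,1)`. -/
def coin : Measure (ℤ → Bool) :=
  (volume.restrict (Set.Ioo (0:ℝ) 1)).map (fun x (i : ℤ) => rbit (Encodable.encode i) x)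

/-! ### F-SSEP dynamics -/

/-- `wantsR η i`: the particle at `i` attempts to jump to the right. -/
def wantsR (η : X) (i : ℤ) : Bool := η i && η (i - 1) && !η (i + 1)
/-- `wantsL η i`: the particle at `i` attempts to jump to the left. -/
def wantsL (η : X) (i : ℤ) : Bool := η i && η (i + 1) && !η (i - 1)
/-- The particle at `i` jumps to the right (the coin at the target site resolves conflicts). -/
def jumpsR (η : X) (α : ℤ → Bool) (i : ℤ) : Bool :=
  wantsR η i && (!(wantsL η (i + 2)) || α (i + 1))
/-- The particle at `i` jumps to the left. -/
def jumpsL (η : X) (α : ℤ → Bool) (i : ℤ) : Bool :=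
  wantsL η i && (!(wantsR η (i - 2)) || !(α (i - 1)))
/-- One synchronous step of the F-SSEP given the coin field `α`. -/
def fstep (η : X) (α : ℤ → Bool) : X := fun i =>
  (η i && !(jumpsR η α i) && !(jumpsL η α i)) || jumpsR η α (i - 1) || jumpsL η α (i + 1)

/-- The transition kernel of the F-SSEP. -/
def QF (η : X) : Measure X := coin.map (fstep η)

/-! ### SSM dynamics -/

/-- Net rightward particle flow across the bond `⟨k,k+1⟩` given the coin field `α`. -/
def flow (n : XS) (α : ℤ → Bool) (k : ℤ) : ℤ :=
  if 2 ≤ n k then (if 2 ≤ n (k + 1) then (if α k then 1 else -1) else 1)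
  else (if 2 ≤ n (k + 1) then -1 else 0)
/-- One synchronous step of the SSM given the coin field `α`. -/
def sstep (n : XS) (α : ℤ → Bool) : XS := fun i =>
  ((n i : ℤ) + flow n α (i - 1) - flow n α i).toNat

/-- The transition kernel of the SSM. -/
def QS (n : XS) : Measure XS := coin.map (sstep n)

/-! ### Shifts and classes of measures -/

/-- The shift `τ` on sequences of Booleans: `(τη)(i) = η(i-1)`. -/
def shf (η : ℤ → Bool) : ℤ → Bool := fun i => η (i - 1)
/-- The shift `τ` on stack configurations. -/
def shs (n : XS) : XS := fun i => n (i - 1)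

/-- Translation-invariant probability measure on `X`. -/
def TIF (μ : Measure X) : Prop := IsProbabilityMeasure μ ∧ μ.map shf = μ
/-- Translation-invariant stationary state of the F-SSEP. -/
def TISF (μ : Measure X) : Prop := TIF μ ∧ μ.bind QF = μ
/-- Ergodic translation-invariant measure on `X` (extreme point of the TI measures). -/
def ErgF (μ : Measure X) : Prop := TIF μ ∧ ∀ μ₁ μ₂ : Measure X, TIF μ₁ → TIF μ₂ →
  ∀ p : ℝ≥0∞, 0 < p → p < 1 → μ = p • μ₁ + (1 - p) • μ₂ → μ₁ = μ
/-- Extremal translation-invariant stationary state of the F-SSEP. -/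
def ETISF (μ : Measure X) : Prop := TISF μ ∧ ∀ μ₁ μ₂ : Measure X, TISF μ₁ → TISF μ₂ →
  ∀ p : ℝ≥0∞, 0 < p → p < 1 → μ = p • μ₁ + (1 - p) • μ₂ → μ₁ = μ
/-- A measure on `X` is regular if the all-ones configuration carries no mass. -/
def RegF (μ : Measure X) : Prop := μ {η : X | ∀ i, η i = true} = 0

/-- Translation-invariant probability measure on `X̂`. -/
def TI_S (μ : Measure XS) : Prop := IsProbabilityMeasure μ ∧ μ.map shs = μ
/-- Translation-invariant stationary state of the SSM. -/
def TIS_S (μ : Measure XS) : Prop := TI_S μ ∧ μ.bind QS = μ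
/-- Ergodic translation-invariant measure on `X̂`. -/
def Erg_S (μ : Measure XS) : Prop := TI_S μ ∧ ∀ μ₁ μ₂ : Measure XS, TI_S μ₁ → TI_S μ₂ →
  ∀ p : ℝ≥0∞, 0 < p → p < 1 → μ = p • μ₁ + (1 - p) • μ₂ → μ₁ = μ
/-- Extremal translation-invariant stationary state of the SSM. -/
def ETIS_S (μ : Measure XS) : Prop := TIS_S μ ∧ ∀ μ₁ μ₂ : Measure XS, TIS_S μ₁ → TIS_S μ₂ →
  ∀ p : ℝ≥0∞, 0 < p → p < 1 → μ = p • μ₁ + (1 - p) • μ₂ → μ₁ = μ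
/-- A measure on `X̂` is regular if the expected stack height at the origin is finite. -/
def Reg_S (μ : Measure XS) : Prop := ∫⁻ n, (n 0 : ℝ≥0∞) ∂μ ≠ ⊤

/-! ### Densities -/

/-- `μ` has density `ρ`: a.s. both one-sided Cesàro averages of the configuration equal `ρ`. -/
def densF (μ : Measure X) (ρ : ℝ) : Prop :=
  ∀ᵐ η ∂μ,
    Tendsto (fun N : ℕ => (∑ i ∈ Finset.range N, (if η ((i : ℤ) + 1) then (1:ℝ) else 0)) / (N : ℝ))
      atTop (nhds ρ) ∧
    Tendsto (fun N : ℕ => (∑ i ∈ Finset.range N, (if η (-(i : ℤ) - 1) then (1:ℝ) else 0)) / (N : ℝ))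
      atTop (nhds ρ)

/-- `μ` has density `ρ̂`: a.s. both one-sided Cesàro averages of the stack heights equal `ρ̂`. -/
def densS (μ : Measure XS) (ρ : ℝ) : Prop :=
  ∀ᵐ n ∂μ,
    Tendsto (fun N : ℕ => (∑ i ∈ Finset.range N, (n ((i : ℤ) + 1) : ℝ)) / (N : ℝ)) atTop (nhds ρ) ∧
    Tendsto (fun N : ℕ => (∑ i ∈ Finset.range N, (n (-(i : ℤ) - 1) : ℝ)) / (N : ℝ)) atTop (nhds ρ)

/-! ### Special sets of configurations -/

/-- Frozen F-SSEP configurations: no two adjacent occupied sites. -/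
def frozenF : Set X := {η | ∀ i : ℤ, η i = false ∨ η (i + 1) = false}
/-- Frozen SSM configurations: every stack has height `0` or `1`. -/
def frozenS : Set XS := {n | ∀ i : ℤ, n i ≤ 1}
/-- `X̂*`: no two adjacent short stacks. -/
def XstarS : Set XS := {n | ∀ i : ℤ, ¬(n i ≤ 1 ∧ n (i + 1) ≤ 1)}
/-- The even sector `X̂*_e`: all heights even, no two adjacent zeros. -/
def XeS : Set XS := {n | (∀ i : ℤ, Even (n i)) ∧ ∀ i : ℤ, ¬(n i = 0 ∧ n (i + 1) = 0)}
/-- `H = φ(X̂*)`: the F-SSEP configurations containing none of `000`, `0100`, `0010`, `01010`. -/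
def Hset : Set X := {η | ∀ i : ℤ,
  ¬(η i = false ∧ η (i+1) = false ∧ η (i+2) = false) ∧
  ¬(η i = false ∧ η (i+1) = true ∧ η (i+2) = false ∧ η (i+3) = false) ∧
  ¬(η i = false ∧ η (i+1) = false ∧ η (i+2) = true ∧ η (i+3) = false) ∧
  ¬(η i = false ∧ η (i+1) = true ∧ η (i+2) = false ∧ η (i+3) = true ∧ η (i+4) = false)}

/-- The height profile `h_η`, with `h_η(0) = 0` and increments `(-1)^{η(k)}`. -/
def hgt (η : X) (k : ℤ) : ℤ :=
  (∑ i ∈ Finset.Icc (1:ℤ) k, (if η i then (-1:ℤ) else 1)) -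
    (∑ i ∈ Finset.Icc (k + 1) (0:ℤ), (if η i then (-1:ℤ) else 1))

/-! ### The stationary path measure -/

/-- Finite-dimensional distributions of the stationary F-SSEP Markov chain started from `μ`. -/
def chain (μ : Measure X) : (n : ℕ) → Measure (Fin (n + 1) → X)
  | 0 => μ.map (fun η _ => η)
  | (n + 1) => (chain μ n).bind
      (fun path => (QF (path (Fin.last n))).map (fun η' => Fin.snoc path η'))

/-- `P` is the two-sided stationary path measure of the F-SSEP with one-time marginal `μ`. -/
def IsPathMeasure (μ : Measure X) (P : Measure (ℤ → X)) : Prop :=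
  IsProbabilityMeasure P ∧ ∀ (t : ℤ) (n : ℕ),
    P.map (fun ξ (k : Fin (n + 1)) => ξ (t + ((k : ℕ) : ℤ))) = chain μ n

/-! ### Bernoulli initial states and the time evolution -/

/-- An i.i.d. family of uniform `[0,1]` random variables extracted from a single uniform. -/
def unif01 (x : ℝ) (i : ℤ) : ℝ :=
  ∑' k : ℕ, if rbit (Nat.pair (Encodable.encode i) k) x then ((2:ℝ) ^ (k + 1))⁻¹ else 0

/-- The Bernoulli product measure of density `ρ` on `X`. -/
def bernoulliProd (ρ : ℝ) : Measure X :=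
  (volume.restrict (Set.Ioo (0:ℝ) 1)).map (fun x (i : ℤ) => decide (unif01 x i < ρ))

/-- `iterF μ t = μ Q^t`, the state at time `t` of the F-SSEP started from `μ`. -/
def iterF (μ : Measure X) : ℕ → Measure X
  | 0 => μ
  | (t + 1) => (iterF μ t).bind QF

/-- `S_η`: the sites `i` with `η(i-2) = η(i-1) = η(i) = 0`. -/
def Sset (η : X) : Set ℤ := {i | η (i - 2) = false ∧ η (i - 1) = false ∧ η i = false}

/-- The event that `t 0 < t 1 < ⋯ < t m` are consecutive points of `S_η`. -/
def renewEvent (t : ℕ → ℤ) (m : ℕ) : Set X :=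
  {η | (∀ j ≤ m, t j ∈ Sset η) ∧ ∀ x : ℤ, t 0 ≤ x → x ≤ t m → x ∈ Sset η → ∃ j ≤ m, t j = x}

/-! ### Substitution subshifts -/

/-- The smallest translation-invariant subset of `X` containing all configurations obtained
by the letterwise substitution `b ↦ w b`. -/
def substSet (w : Bool → List Bool) : Set X :=
  {η | ∃ (ζ : ℤ → Bool) (K : ℤ → ℤ),
    (∀ i : ℤ, K (i + 1) = K i + (w (ζ i)).length) ∧
    ∀ (i : ℤ) (j : ℕ) (h : j < (w (ζ i)).length), η (K i + (j : ℤ)) = (w (ζ i)).get ⟨j, h⟩}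

/-- The substitution `1 → 1100`, `0 → 10`. -/
def wLeft : Bool → List Bool := fun b => if b then [true, true, false, false] else [true, false]
/-- The substitution `1 → 0011`, `0 → 01`. -/
def wRight : Bool → List Bool := fun b => if b then [false, false, true, true] else [false, true]

/-- `X_left`. -/
def Xleft : Set X := substSet wLeft
/-- `X_right`. -/
def Xright : Set X := substSet wRight

/-- `X̂_left`: heights at most 2, a 2 is followed by a 0, a 0 is preceded by a 2. -/
def XSleft : Set XS :=
  {n | ∀ i : ℤ, n i ≤ 2 ∧ (n i = 2 → n (i + 1) = 0) ∧ (n i = 0 → n (i - 1) = 2)}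
/-- `X̂_right`: the spatial reflection of `X̂_left`. -/
def XSright : Set XS :=
  {n | ∀ i : ℤ, n i ≤ 2 ∧ (n i = 2 → n (i - 1) = 0) ∧ (n i = 0 → n (i + 1) = 2)}

/-! ### Ring measures and the grand canonical limit -/

/-- Admissible even ring configurations: all heights even, no two cyclically adjacent zeros. -/
def ringOK (L : ℕ) (n : ZMod (2 * L + 1) → ℕ) : Prop :=
  (∀ i, Even (n i)) ∧ ∀ i, ¬(n i = 0 ∧ n (i + 1) = 0)

/-- The grand canonical weight `ζ^{Σ n(i)} 4^{-z(n)}` of an admissible ring configuration. -/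
def ringW (ζ : ℝ) (L : ℕ) (n : ZMod (2 * L + 1) → ℕ) : ℝ≥0∞ :=
  if ringOK L n then
    (ENNReal.ofReal ζ) ^ (∑ i, n i) *
      ((4 : ℝ≥0∞) ^ (Finset.univ.filter (fun i => n i = 0)).card)⁻¹
  else 0

/-- The grand canonical measure `μ^(ζ,L)` on the ring of `2L+1` sites. -/
def muRing (ζ : ℝ) (L : ℕ) : Measure (ZMod (2 * L + 1) → ℕ) :=
  (∑' n, ringW ζ L n)⁻¹ • Measure.sum (fun n => ringW ζ L n • Measure.dirac n)

/-- The cylinder set in the ring determined by `m` on the window `[-K,K]`. -/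
def ringCyl (L K : ℕ) (m : ℤ → ℕ) : Set (ZMod (2 * L + 1) → ℕ) :=
  {n | ∀ i ∈ Finset.Icc (-(K : ℤ)) (K : ℤ), n ((i : ℤ) : ZMod (2 * L + 1)) = m i}

/-- The cylinder set in `X̂` determined by `m` on the window `[-K,K]`. -/
def cylS (K : ℕ) (m : ℤ → ℕ) : Set XS := {n | ∀ i ∈ Finset.Icc (-(K : ℤ)) (K : ℤ), n i = m i}

/-- `μ` is the weak limit `μ^(ζ,∞) = lim_L μ^(ζ,L)` (all cylinder probabilities converge). -/
def IsGCLimit (ζ : ℝ) (μ : Measure XS) : Prop :=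
  IsProbabilityMeasure μ ∧ ∀ (K : ℕ) (m : ℤ → ℕ),
    Tendsto (fun L : ℕ => muRing ζ L (ringCyl L K m)) atTop (nhds (μ (cylS K m)))

/-- `μ̂^(2)`: equal masses on the two configurations with alternating heights `0` and `2`. -/
def muHat2 : Measure XS :=
  (2 : ℝ≥0∞)⁻¹ • Measure.dirac (fun i : ℤ => if Even i then 2 else 0) +
    (2 : ℝ≥0∞)⁻¹ • Measure.dirac (fun i : ℤ => if Even i then 0 else 2)

/-- Mixing under the shift. -/
def MixingS (μ : Measure XS) : Prop :=
  ∀ A B : Set XS, MeasurableSet A → MeasurableSet B →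
    Tendsto (fun k : ℕ => μ (A ∩ shs^[k] ⁻¹' B)) atTop (nhds (μ A * μ B))

/-- Weak mixing under the shift. -/
def WeakMixS (μ : Measure XS) : Prop :=
  ∀ A B : Set XS, MeasurableSet A → MeasurableSet B →
    Tendsto (fun N : ℕ =>
      (∑ k ∈ Finset.range N,
        |(μ (A ∩ shs^[k] ⁻¹' B)).toReal - (μ A).toReal * (μ B).toReal|) / (N : ℝ))
      atTop (nhds 0)

/-- The Gibbs weight of `m` on the window `[a,b]`, for fugacity `ζ` and the one-body
potential `V(n) = 2 ln 2 · δ_{n,0}` (so `e^{-V(0)} = 1/4`). -/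
def gibbsW (ζ : ℝ) (a b : ℤ) (m : XS) : ℝ≥0∞ :=
  (ENNReal.ofReal ζ) ^ (∑ i ∈ Finset.Icc a b, m i) *
    ((4 : ℝ≥0∞) ^ ((Finset.Icc a b).filter (fun i => m i = 0)).card)⁻¹

/-- `μ` is a Gibbs state for fugacity `ζ` and one-body potential `V(n) = 2 ln 2 · δ_{n,0}`,
together with the hard constraints defining `X̂*_e` (DLR ratio condition). -/
def IsGibbsV (ζ : ℝ) (μ : Measure XS) : Prop :=
  μ XeSᶜ = 0 ∧ ∀ a b : ℤ, a ≤ b → ∀ m m' : XS, m ∈ XeS → m' ∈ XeS →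
    (∀ i : ℤ, i < a ∨ b < i → m i = m' i) →
    μ {n : XS | ∀ i ∈ Finset.Icc (a - 1) (b + 1), n i = m i} * gibbsW ζ a b m' =
      μ {n : XS | ∀ i ∈ Finset.Icc (a - 1) (b + 1), n i = m' i} * gibbsW ζ a b m

/-! ### The parity decomposition -/

/-- `γ(m,σ) = m + σ`. -/
def gam (p : XS × PS) : XS := fun i => p.1 i + (if p.2 i then 1 else 0)
/-- The inverse of `γ` (on `X̂*`): split a configuration into even part and parity. -/
def gamInv (n : XS) : XS × PS := (fun i => n i - n i % 2, fun i => decide (n i % 2 = 1))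
/-- Diagonal shift on `X̂ × S`. -/
def shP (p : XS × PS) : XS × PS := (shs p.1, shf p.2)
/-- The SSM dynamics acting on the first factor of `X̂ × S` and trivially on the second. -/
def QP (p : XS × PS) : Measure (XS × PS) := (QS p.1).map (fun m => (m, p.2))

/-- TIS state on `X̂*_e × S`. -/
def TIS_P (ν : Measure (XS × PS)) : Prop :=
  IsProbabilityMeasure ν ∧ ν.map shP = ν ∧ ν.bind QP = ν ∧ ν {p : XS × PS | p.1 ∉ XeS} = 0
/-- ETIS state on `X̂*_e × S`. -/
def ETIS_P (ν : Measure (XS × PS)) : Prop :=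
  TIS_P ν ∧ ∀ ν₁ ν₂ : Measure (XS × PS), TIS_P ν₁ → TIS_P ν₂ →
    ∀ p : ℝ≥0∞, 0 < p → p < 1 → ν = p • ν₁ + (1 - p) • ν₂ → ν₁ = ν

/-! ### The substitution bijection `Φ_φ` -/

/-- The starting position of the word substituted for the `i`-th letter (word `1` starts
at site `1`, and the word for `n(i)` is `0 1^{n(i)}`, of length `n(i) + 1`). -/
def Kst (n : XS) (i : ℤ) : ℤ :=
  1 + (∑ j ∈ Finset.Icc (1:ℤ) (i - 1), ((n j : ℤ) + 1)) -
    (∑ j ∈ Finset.Icc i (0:ℤ), ((n j : ℤ) + 1))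

/-- The substitution map `φ : X̂ → X`, replacing each height `n(i)` by `0 1^{n(i)}`. -/
def phiSub (n : XS) : X := fun x => if ∃ i : ℤ, Kst n i = x then false else true

/-- The normalization `Z_ν = Σ (k+1) ν({n(1) = k})`. -/
def Zsub (ν : Measure XS) : ℝ≥0∞ := ∑' k : ℕ, ((k : ℝ≥0∞) + 1) * ν {n : XS | n 1 = k}

/-- The bijection `Φ_φ` on regular TI measures induced by the substitution `φ`. -/
def Phi (ν : Measure XS) : Measure X :=
  (Zsub ν)⁻¹ • Measure.sum (fun p : (Σ k : ℕ, Fin (k + 1)) =>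
    (ν.restrict {n : XS | n 1 = p.1}).map (fun n (x : ℤ) => phiSub n (x + ((p.2 : ℕ) : ℤ))))

/-! ### Basic states -/

/-- The image `τ(A)` of a set of parity sequences under the shift. -/
def shiftSetP (A : Set PS) : Set PS := {σ | (fun i => σ (i + 1)) ∈ A}

/-- Cyclic successor in `Fin m`. -/
def finCycSucc {m : ℕ} (k : Fin m) : Fin m := ⟨(k.val + 1) % m, Nat.mod_lt _ k.pos⟩

/-- A `(λ,m)`-partition of `S`: pairwise disjoint, covering, cyclically permuted by the
shift (all modulo `λ`-null sets). -/
def IsCycPartition (lam : Measure PS) (m : ℕ) (A : Fin m → Set PS) : Prop :=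
  lam (⋃ k, A k)ᶜ = 0 ∧ (∀ k l, k ≠ l → lam (A k ∩ A l) = 0) ∧
    ∀ k, lam ((shiftSetP (A k) \ A (finCycSucc k)) ∪ (A (finCycSucc k) \ shiftSetP (A k))) = 0

/-- `ν^(q) = q⁻¹ Σ_{i<q} τ^{im}_* ν`. -/
def nuQ (ν : Measure XS) (q m : ℕ) : Measure XS :=
  ((q : ℝ≥0∞))⁻¹ • Measure.sum (fun i : Fin q => ν.map (shs^[(i : ℕ) * m]))

/-- The measure `μ̃^(λ,ν,A)` on `X̂*_e × S`, with `μ_σ = τ^k_* ν^(q)` for `σ ∈ A_k`. -/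
def mutilde (lam : Measure PS) (ν : Measure XS) (q m : ℕ) (A : Fin m → Set PS) :
    Measure (XS × PS) :=
  Measure.sum (fun k : Fin m => (((nuQ ν q m).map (shs^[(k : ℕ)])).prod (lam.restrict (A k))))

/-- `N_{ρ̂_e}`: stationary probability measures of the SSM supported on `X̂*_e` of
density `ρ̂_e` (not necessarily translation invariant). -/
def Nset (ρe : ℝ) : Set (Measure XS) :=
  {ν | IsProbabilityMeasure ν ∧ ν.bind QS = ν ∧ ν XeSᶜ = 0 ∧ densS ν ρe}

/-- `N̄_{ρ̂_e}`: the extreme points of `N_{ρ̂_e}`. -/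
def NExt (ρe : ℝ) : Set (Measure XS) :=
  {ν | ν ∈ Nset ρe ∧ ∀ ν₁ ν₂ : Measure XS, ν₁ ∈ Nset ρe → ν₂ ∈ Nset ρe →
    ∀ p : ℝ≥0∞, 0 < p → p < 1 → ν = p • ν₁ + (1 - p) • ν₂ → ν₁ = ν}

/-- `A'` is a proper refinement of `A` (modulo `λ`-null sets). -/
def ProperRefines (lam : Measure PS) {m m' : ℕ} (A' : Fin m' → Set PS) (A : Fin m → Set PS) :
    Prop :=
  m < m' ∧ ∀ j : Fin m', ∃ k : Fin m, lam (A' j \ A k) = 0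

/-- `μ` is an irreducible basic state of the SSM on `X̂*`. -/
def IsIrreducibleBasic (μ : Measure XS) : Prop :=
  ∃ (lam : Measure PS) (ρe : ℝ) (ν : Measure XS) (n m q : ℕ) (A : Fin m → Set PS),
    ErgF lam ∧ 1 ≤ ρe ∧ ν ∈ NExt ρe ∧
    0 < n ∧ ν.map (shs^[n]) = ν ∧ (∀ j : ℕ, 0 < j → j < n → ν.map (shs^[j]) ≠ ν) ∧
    n = q * m ∧ IsCycPartition lam m A ∧
    (¬ ∃ (m' : ℕ) (A' : Fin m' → Set PS),
      m' ∣ n ∧ IsCycPartition lam m' A' ∧ ProperRefines lam A' A) ∧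
    μ = (mutilde lam ν q m A).map gam

/-! ### Auxiliary lemmas for Statement 14 -/

section Aux14

open ProbabilityTheory

/-! #### Pointwise lemmas -/

lemma flow_congr {n n' : XS} (h : ∀ j : ℤ, 2 ≤ n j ↔ 2 ≤ n' j) (α : ℤ → Bool) (k : ℤ) :
    flow n α k = flow n' α k := by
  unfold flow
  rw [if_congr (h k) (if_congr (h (k + 1)) rfl rfl) (if_congr (h (k + 1)) rfl rfl)]

lemma flow_pm {n : XS} (hn : n ∈ XstarS) (α : ℤ → Bool) (k : ℤ) :
    flow n α k = 1 ∨ flow n α k = -1 := by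
  have h := hn k
  unfold flow
  split_ifs <;> omega

lemma sstep_int {n : XS} (hn : n ∈ XstarS) (α : ℤ → Bool) (i : ℤ) :
    (sstep n α i : ℤ) = (n i : ℤ) + flow n α (i - 1) - flow n α i := by
  have key : 0 ≤ (n i : ℤ) + flow n α (i - 1) - flow n α i := by
    by_cases h : 2 ≤ n i
    · rcases flow_pm hn α (i - 1) with h1 | h1 <;> rcases flow_pm hn α i with h2 | h2 <;>
        rw [h1, h2] <;> omega
    · have ha := hn (i - 1)
      have hb := hn i
      rw [show i - 1 + 1 = i by omega] at ha
      have h1 : flow n α (i - 1) = 1 := by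
        unfold flow
        rw [show i - 1 + 1 = i by omega]
        split_ifs <;> omega
      have h2 : flow n α i = -1 := by
        unfold flow
        split_ifs <;> omega
      rw [h1, h2]; omega
  show ((((n i : ℤ) + flow n α (i - 1) - flow n α i).toNat : ℕ) : ℤ) = _
  exact Int.toNat_of_nonneg key

lemma gam_gamInv (n : XS) : gam (gamInv n) = n := by
  funext i
  show (n i - n i % 2) + (if decide (n i % 2 = 1) then 1 else 0) = n i
  by_cases h : n i % 2 = 1 <;> simp [h] <;> omega

lemma gamInv_gam {p : XS × PS} (h : ∀ i, Even (p.1 i)) : gamInv (gam p) = p := by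
  obtain ⟨m, σ⟩ := p
  refine Prod.ext (funext fun i => ?_) (funext fun i => ?_) <;>
    have h2i : m i % 2 = 0 := Nat.even_iff.mp (h i)
  · show (m i + if (σ i : Prop) then 1 else 0) - (m i + if (σ i : Prop) then 1 else 0) % 2 = m i
    cases hσ : σ i <;> simp [hσ] <;> omega
  · show decide ((m i + if (σ i : Prop) then 1 else 0) % 2 = 1) = σ i
    cases hσ : σ i <;> simp [hσ] <;> omega

lemma gamInv_fst_mem_XeS {n : XS} (hn : n ∈ XstarS) : (gamInv n).1 ∈ XeS := by
  constructor
  · intro i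
    exact Nat.even_iff.mpr (by show (n i - n i % 2) % 2 = 0; omega)
  · intro i hc
    obtain ⟨h1, h2⟩ := hc
    have h1' : n i - n i % 2 = 0 := h1
    have h2' : n (i + 1) - n (i + 1) % 2 = 0 := h2
    exact hn i ⟨by omega, by omega⟩

lemma XeS_subset_XstarS {m : XS} (hm : m ∈ XeS) : m ∈ XstarS := by
  intro i hc
  have e1 := Nat.even_iff.mp (hm.1 i)
  have e2 := Nat.even_iff.mp (hm.1 (i + 1))
  exact hm.2 i ⟨by omega, by omega⟩

lemma gam_mem_XstarS {p : XS × PS} (hp : p.1 ∈ XeS) : gam p ∈ XstarS := by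
  intro i hc
  have e1 := Nat.even_iff.mp (hp.1 i)
  have e2 := Nat.even_iff.mp (hp.1 (i + 1))
  have l1 : p.1 i ≤ gam p i := Nat.le_add_right _ _
  have l2 : p.1 (i + 1) ≤ gam p (i + 1) := Nat.le_add_right _ _
  exact hp.2 i ⟨by omega, by omega⟩

lemma two_le_gam_iff {p : XS × PS} (h : ∀ i, Even (p.1 i)) (k : ℤ) :
    2 ≤ gam p k ↔ 2 ≤ p.1 k := by
  have h2 := Nat.even_iff.mp (h k)
  cases hb : p.2 k <;> simp [gam, hb] <;> omega

lemma two_le_gamInv_iff (n : XS) (k : ℤ) : 2 ≤ (gamInv n).1 k ↔ 2 ≤ n k := by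
  show 2 ≤ n k - n k % 2 ↔ 2 ≤ n k
  omega

lemma gamInv_sstep {n : XS} (hn : n ∈ XstarS) (α : ℤ → Bool) :
    gamInv (sstep n α) = (sstep (gamInv n).1 α, (gamInv n).2) := by
  have hmem : (gamInv n).1 ∈ XstarS := XeS_subset_XstarS (gamInv_fst_mem_XeS hn)
  have hflow : ∀ k, flow (gamInv n).1 α k = flow n α k :=
    fun k => flow_congr (fun j => two_le_gamInv_iff n j) α k
  refine Prod.ext ?_ ?_ <;> funext i
  · have h1 := sstep_int hn α i
    have h2 := sstep_int hmem α i
    rw [hflow, hflow] at h2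
    have h3 : (gamInv n).1 i = n i - n i % 2 := rfl
    show sstep n α i - sstep n α i % 2 = sstep (gamInv n).1 α i
    rcases flow_pm hn α (i - 1) with hf1 | hf1 <;> rcases flow_pm hn α i with hf2 | hf2 <;>
      rw [hf1, hf2] at h1 h2 <;> omega
  · have h1 := sstep_int hn α i
    have hpar : sstep n α i % 2 = n i % 2 := by
      rcases flow_pm hn α (i - 1) with hf1 | hf1 <;> rcases flow_pm hn α i with hf2 | hf2 <;>
        rw [hf1, hf2] at h1 <;> omega
    show decide (sstep n α i % 2 = 1) = decide (n i % 2 = 1)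
    rw [hpar]

lemma sstep_gam {p : XS × PS} (hp : p.1 ∈ XeS) (α : ℤ → Bool) :
    sstep (gam p) α = gam (sstep p.1 α, p.2) := by
  have h1 : gam p ∈ XstarS := gam_mem_XstarS hp
  have h2 : p.1 ∈ XstarS := XeS_subset_XstarS hp
  have hflow : ∀ k, flow (gam p) α k = flow p.1 α k :=
    fun k => flow_congr (fun j => two_le_gam_iff hp.1 j) α k
  funext i
  have e1 := sstep_int h1 α i
  have e2 := sstep_int h2 α i
  rw [hflow, hflow] at e1
  show sstep (gam p) α i = sstep p.1 α i + (if (p.2 i : Prop) then 1 else 0)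
  have e3 : gam p i = p.1 i + (if (p.2 i : Prop) then 1 else 0) := rfl
  cases hb : p.2 i <;> simp only [hb] at e3 ⊢ <;> simp at e3 ⊢ <;> omega

lemma shP_gamInv_eq (n : XS) : shP (gamInv n) = gamInv (shs n) := rfl

lemma gam_shP_eq (p : XS × PS) : gam (shP p) = shs (gam p) := rfl

/-! #### Measurability -/

lemma meas_discrete {α : Type*} [MeasurableSpace α] {γ β : Type*} [Countable γ]
    [MeasurableSpace γ] [MeasurableSingletonClass γ] [MeasurableSpace β] {g : α → γ}
    (hg : Measurable g) (F : γ → β) : Measurable (fun a => F (g a)) :=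
  (measurable_of_countable F).comp hg

lemma measurable_sstep2 : Measurable fun q : XS × (ℤ → Bool) => sstep q.1 q.2 := by
  apply measurable_pi_lambda
  intro i
  have hg : Measurable fun q : XS × (ℤ → Bool) =>
      ((q.1 (i - 1), q.1 (i - 1 + 1), q.1 i, q.1 (i + 1)), (q.2 (i - 1), q.2 i)) := by
    apply Measurable.prodMk
    · exact (((measurable_pi_apply _).comp measurable_fst).prodMk
        (((measurable_pi_apply _).comp measurable_fst).prodMk
        (((measurable_pi_apply _).comp measurable_fst).prodMk
        ((measurable_pi_apply _).comp measurable_fst))))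
    · exact ((measurable_pi_apply _).comp measurable_snd).prodMk
        ((measurable_pi_apply _).comp measurable_snd)
  exact meas_discrete hg (fun x : (ℕ × ℕ × ℕ × ℕ) × (Bool × Bool) =>
    ((x.1.2.2.1 : ℤ) +
      (if 2 ≤ x.1.1 then (if 2 ≤ x.1.2.1 then (if x.2.1 then 1 else -1) else 1)
        else (if 2 ≤ x.1.2.1 then -1 else 0)) -
      (if 2 ≤ x.1.2.2.1 then (if 2 ≤ x.1.2.2.2 then (if x.2.2 then 1 else -1) else 1)
        else (if 2 ≤ x.1.2.2.2 then -1 else 0))).toNat)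

lemma measurable_sstep (n : XS) : Measurable (sstep n) :=
  measurable_sstep2.comp (measurable_const.prodMk measurable_id)

lemma measurable_gam : Measurable gam :=
  measurable_pi_lambda _ fun i =>
    (meas_discrete ((((measurable_pi_apply i).comp measurable_fst).prodMk
      ((measurable_pi_apply i).comp measurable_snd) : Measurable fun c : XS × PS => (c.1 i, c.2 i)))
      (fun x : ℕ × Bool => x.1 + if x.2 then 1 else 0) :)

lemma measurable_gamInv : Measurable gamInv :=
  Measurable.prodMk
    (measurable_pi_lambda _ fun i => (meas_discrete (measurable_pi_apply i : Measurable fun n : XS => n i)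
      (fun k : ℕ => k - k % 2) :))
    (measurable_pi_lambda _ fun i => (meas_discrete (measurable_pi_apply i : Measurable fun n : XS => n i)
      (fun k : ℕ => decide (k % 2 = 1)) :))

lemma measurable_shs : Measurable shs :=
  measurable_pi_lambda _ fun i => measurable_pi_apply (i - 1)

lemma measurable_shf : Measurable shf :=
  measurable_pi_lambda _ fun i => measurable_pi_apply (i - 1)

lemma measurable_shP : Measurable shP :=
  (measurable_shs.comp measurable_fst).prodMk (measurable_shf.comp measurable_snd)

/-- The shift on `PS × XS` (swapped factors). -/
def shQ (q : PS × XS) : PS × XS := (shf q.1, shs q.2)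

/-- Inverse shift on parity sequences. -/
def shfInv (σ : PS) : PS := fun i => σ (i + 1)

/-- Inverse shift on stack configurations. -/
def shsInv (m : XS) : XS := fun i => m (i + 1)

/-- The inverse shift on `PS × XS`. -/
def shQinv (q : PS × XS) : PS × XS := (shfInv q.1, shsInv q.2)

lemma measurable_shfInv : Measurable shfInv :=
  measurable_pi_lambda _ fun i => measurable_pi_apply (i + 1)

lemma measurable_shsInv : Measurable shsInv :=
  measurable_pi_lambda _ fun i => measurable_pi_apply (i + 1)

lemma measurable_shQ : Measurable shQ :=
  (measurable_shf.comp measurable_fst).prodMk (measurable_shs.comp measurable_snd)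

lemma measurable_shQinv : Measurable shQinv :=
  (measurable_shfInv.comp measurable_fst).prodMk (measurable_shsInv.comp measurable_snd)

lemma shfInv_shf (σ : PS) : shfInv (shf σ) = σ := by
  funext i; show σ (i + 1 - 1) = σ i; congr 1; omega

lemma shf_shfInv (σ : PS) : shf (shfInv σ) = σ := by
  funext i; show σ (i - 1 + 1) = σ i; congr 1; omega

lemma shsInv_shs (m : XS) : shsInv (shs m) = m := by
  funext i; show m (i + 1 - 1) = m i; congr 1; omega

lemma shs_shsInv (m : XS) : shs (shsInv m) = m := by
  funext i; show m (i - 1 + 1) = m i; congr 1; omega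

lemma shQinv_shQ (q : PS × XS) : shQinv (shQ q) = q := by
  obtain ⟨σ, m⟩ := q
  simp [shQinv, shQ, shfInv_shf, shsInv_shs]

lemma shQ_swap : shQ ∘ Prod.swap = Prod.swap ∘ shP := rfl

lemma measurable_rbit (m : ℕ) : Measurable (rbit m) := by
  unfold rbit
  exact meas_discrete (Int.measurable_floor.comp (measurable_id.mul_const _))
    (fun z : ℤ => decide (z % 2 = 1))

lemma measurable_coinfun : Measurable fun x : ℝ => (fun i : ℤ => rbit (Encodable.encode i) x) :=
  measurable_pi_lambda _ fun i => measurable_rbit _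

instance : IsProbabilityMeasure coin := by
  have h : IsProbabilityMeasure (volume.restrict (Set.Ioo (0:ℝ) 1)) := by
    constructor
    rw [Measure.restrict_apply_univ, Real.volume_Ioo]
    norm_num
  exact Measure.isProbabilityMeasure_map measurable_coinfun.aemeasurable

instance (n : XS) : IsProbabilityMeasure (QS n) :=
  Measure.isProbabilityMeasure_map (measurable_sstep n).aemeasurable

instance (p : XS × PS) : IsProbabilityMeasure (QP p) :=
  Measure.isProbabilityMeasure_map (measurable_id.prodMk measurable_const).aemeasurable

lemma measurableSet_XeS : MeasurableSet XeS := by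
  have : XeS = (⋂ i : ℤ, (fun n : XS => n i) ⁻¹' {k | Even k}) ∩
      ⋂ i : ℤ, ((fun n : XS => n i) ⁻¹' {0} ∩ (fun n : XS => n (i + 1)) ⁻¹' {0})ᶜ := by
    ext n
    simp only [XeS, Set.mem_setOf_eq, Set.mem_inter_iff, Set.mem_iInter, Set.mem_preimage,
      Set.mem_compl_iff, Set.mem_singleton_iff]
  rw [this]
  exact (MeasurableSet.iInter fun i => (measurable_pi_apply i) MeasurableSpace.measurableSet_top).inter
    (MeasurableSet.iInter fun i =>
      (((measurable_pi_apply i) MeasurableSpace.measurableSet_top).inter ((measurable_pi_apply (i + 1)) MeasurableSpace.measurableSet_top)).compl)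

lemma measurableSet_XstarS : MeasurableSet XstarS := by
  have : XstarS = ⋂ i : ℤ, ((fun n : XS => n i) ⁻¹' {k | k ≤ 1} ∩
      (fun n : XS => n (i + 1)) ⁻¹' {k | k ≤ 1})ᶜ := by
    ext n
    simp only [XstarS, Set.mem_setOf_eq, Set.mem_iInter, Set.mem_preimage,
      Set.mem_compl_iff, Set.mem_inter_iff]
  rw [this]
  exact MeasurableSet.iInter fun i =>
    (((measurable_pi_apply i) MeasurableSpace.measurableSet_top).inter ((measurable_pi_apply (i + 1)) MeasurableSpace.measurableSet_top)).compl

/-! #### The kernels -/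

lemma measurable_QS : Measurable fun n : XS => QS n := by
  apply Measure.measurable_of_measurable_coe
  intro s hs
  have h0 : ∀ n : XS, QS n s = ∫⁻ α, s.indicator 1 (sstep n α) ∂coin := by
    intro n
    rw [QS, Measure.map_apply (measurable_sstep n) hs,
      ← lintegral_indicator_one ((measurable_sstep n) hs)]
    refine lintegral_congr fun α => ?_
    simp only [Set.indicator_apply, Set.mem_preimage, Pi.one_apply]
  simp_rw [h0]
  exact Measurable.lintegral_prod_right ((measurable_one.indicator hs).comp measurable_sstep2)

lemma measurable_QP : Measurable fun p : XS × PS => QP p := by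
  apply Measure.measurable_of_measurable_coe
  intro s hs
  have hpair : ∀ p : XS × PS, Measurable fun m : XS => (m, p.2) := fun p =>
    measurable_id.prodMk measurable_const
  have hg : Measurable fun q : (XS × PS) × (ℤ → Bool) => (sstep q.1.1 q.2, q.1.2) :=
    (measurable_sstep2.comp ((measurable_fst.comp measurable_fst).prodMk
      measurable_snd)).prodMk (measurable_snd.comp measurable_fst)
  have h0 : ∀ p : XS × PS, QP p s = ∫⁻ α, s.indicator 1 (sstep p.1 α, p.2) ∂coin := by
    intro p
    rw [QP, Measure.map_apply (hpair p) hs, QS,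
      Measure.map_apply (measurable_sstep p.1) (hpair p hs),
      ← lintegral_indicator_one ((measurable_sstep p.1) ((hpair p) hs))]
    refine lintegral_congr fun α => ?_
    simp only [Set.indicator_apply, Set.mem_preimage, Pi.one_apply]
  simp_rw [h0]
  exact Measurable.lintegral_prod_right ((measurable_one.indicator hs).comp hg)

/-- The SSM transition kernel as a Mathlib kernel. -/
noncomputable def QSK : Kernel XS XS := ⟨QS, measurable_QS⟩

@[simp] lemma QSK_apply (n : XS) : QSK n = QS n := rfl

instance : IsMarkovKernel QSK := ⟨fun n => by rw [QSK_apply]; infer_instance⟩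

/-- The lifted transition kernel on `X̂ × S` as a Mathlib kernel. -/
noncomputable def QPK : Kernel (XS × PS) (XS × PS) := ⟨QP, measurable_QP⟩

@[simp] lemma QPK_apply (p : XS × PS) : QPK p = QP p := rfl

instance : IsMarkovKernel QPK := ⟨fun p => by rw [QPK_apply]; infer_instance⟩

/-! #### Part (a) -/

lemma measurableSet_badP : MeasurableSet {p : XS × PS | p.1 ∉ XeS} :=
  measurable_fst measurableSet_XeS.compl

lemma QP_gamInv_eq {n : XS} (hn : n ∈ XstarS) : QP (gamInv n) = (QS n).map gamInv := by
  show (QS (gamInv n).1).map (fun m => (m, (gamInv n).2)) = _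
  simp only [QS]
  rw [Measure.map_map measurable_prodMk_right (measurable_sstep _),
    Measure.map_map measurable_gamInv (measurable_sstep _)]
  congr 1
  funext α
  exact (gamInv_sstep hn α).symm

lemma QS_gam_eq {p : XS × PS} (hp : p.1 ∈ XeS) : QS (gam p) = (QP p).map gam := by
  simp only [QP, QS]
  rw [Measure.map_map measurable_prodMk_right (measurable_sstep _),
    Measure.map_map measurable_gam (measurable_prodMk_right.comp (measurable_sstep _))]
  congr 1
  funext α
  exact sstep_gam hp α

lemma map_gamInv_bind {μ : Measure XS} (hsupp : μ XstarSᶜ = 0) (hstat : μ.bind QS = μ) :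
    (μ.map gamInv).bind QP = μ.map gamInv := by
  ext s hs
  have hco : Measurable fun p : XS × PS => QP p s := (Measure.measurable_coe hs).comp measurable_QP
  rw [Measure.bind_apply hs measurable_QP.aemeasurable, lintegral_map hco measurable_gamInv]
  have hae : ∀ᵐ n ∂μ, n ∈ XstarS := by rw [ae_iff]; exact hsupp
  have key : ∀ᵐ n ∂μ, QP (gamInv n) s = QS n (gamInv ⁻¹' s) :=
    hae.mono fun n hn => by rw [QP_gamInv_eq hn, Measure.map_apply measurable_gamInv hs]
  rw [lintegral_congr_ae key,
    ← Measure.bind_apply (measurable_gamInv hs) measurable_QS.aemeasurable, hstat,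
    ← Measure.map_apply measurable_gamInv hs]

lemma map_gam_bind {ν : Measure (XS × PS)} (hsupp : ν {p : XS × PS | p.1 ∉ XeS} = 0)
    (hstat : ν.bind QP = ν) : (ν.map gam).bind QS = ν.map gam := by
  ext s hs
  have hco : Measurable fun n : XS => QS n s := (Measure.measurable_coe hs).comp measurable_QS
  rw [Measure.bind_apply hs measurable_QS.aemeasurable, lintegral_map hco measurable_gam]
  have hae : ∀ᵐ p ∂ν, p.1 ∈ XeS := by rw [ae_iff]; exact hsupp
  have key : ∀ᵐ p ∂ν, QS (gam p) s = QP p (gam ⁻¹' s) :=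
    hae.mono fun p hp => by rw [QS_gam_eq hp, Measure.map_apply measurable_gam hs]
  rw [lintegral_congr_ae key,
    ← Measure.bind_apply (measurable_gam hs) measurable_QP.aemeasurable, hstat,
    ← Measure.map_apply measurable_gam hs]

lemma TIS_P_map_gamInv {μ : Measure XS} (h : TIS_S μ) (hsupp : μ XstarSᶜ = 0) :
    TIS_P (μ.map gamInv) := by
  obtain ⟨⟨hprob, hshift⟩, hstat⟩ := h
  haveI := hprob
  refine ⟨Measure.isProbabilityMeasure_map measurable_gamInv.aemeasurable, ?_,
    map_gamInv_bind hsupp hstat, ?_⟩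
  · rw [Measure.map_map measurable_shP measurable_gamInv,
      show shP ∘ gamInv = gamInv ∘ shs from rfl,
      ← Measure.map_map measurable_gamInv measurable_shs, hshift]
  · rw [Measure.map_apply measurable_gamInv measurableSet_badP]
    exact measure_mono_null (fun n hn hx => hn (gamInv_fst_mem_XeS hx)) hsupp

lemma TIS_S_map_gam {ν : Measure (XS × PS)} (h : TIS_P ν) : TIS_S (ν.map gam) := by
  obtain ⟨hprob, hshift, hstat, hsupp⟩ := h
  haveI := hprob
  refine ⟨⟨Measure.isProbabilityMeasure_map measurable_gam.aemeasurable, ?_⟩, map_gam_bind hsupp hstat⟩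
  rw [Measure.map_map measurable_shs measurable_gam,
    show shs ∘ gam = gam ∘ shP from rfl,
    ← Measure.map_map measurable_gam measurable_shP, hshift]

lemma partA (μ : Measure XS) (hsupp : μ XstarSᶜ = 0) : ETIS_S μ ↔ ETIS_P (μ.map gamInv) := by
  have hinv : (μ.map gamInv).map gam = μ := by
    rw [Measure.map_map measurable_gam measurable_gamInv,
      show gam ∘ gamInv = id from funext gam_gamInv, Measure.map_id]
  constructor
  · rintro ⟨hTIS, hext⟩
    refine ⟨TIS_P_map_gamInv hTIS hsupp, ?_⟩
    intro ν₁ ν₂ h1 h2 p hp0 hp1 hdec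
    have hdec' : μ = p • (ν₁.map gam) + (1 - p) • (ν₂.map gam) := by
      rw [← hinv, hdec, Measure.map_add _ _ measurable_gam, Measure.map_smul, Measure.map_smul]
    have h1' := hext _ _ (TIS_S_map_gam h1) (TIS_S_map_gam h2) p hp0 hp1 hdec'
    have hfix : (ν₁.map gam).map gamInv = ν₁ := by
      rw [Measure.map_map measurable_gamInv measurable_gam]
      have hae : (gamInv ∘ gam) =ᵐ[ν₁] id := by
        have h0 : ∀ᵐ q ∂ν₁, q.1 ∈ XeS := by rw [ae_iff]; exact h1.2.2.2
        exact h0.mono fun q hq => gamInv_gam hq.1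
      rw [Measure.map_congr hae, Measure.map_id]
    rw [← hfix, h1']
  · rintro ⟨hTISP, hext⟩
    have hTIS : TIS_S μ := hinv ▸ TIS_S_map_gam hTISP
    refine ⟨hTIS, ?_⟩
    intro μ₁ μ₂ h1 h2 p hp0 hp1 hdec
    have happ : (p • μ₁ + (1 - p) • μ₂) XstarSᶜ = 0 := by rw [← hdec]; exact hsupp
    rw [Measure.add_apply, Measure.smul_apply, Measure.smul_apply, smul_eq_mul,
      smul_eq_mul] at happ
    have h1z : μ₁ XstarSᶜ = 0 :=
      (mul_eq_zero.mp (add_eq_zero.mp happ).1).resolve_left hp0.ne'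
    have h2z : μ₂ XstarSᶜ = 0 := by
      refine (mul_eq_zero.mp (add_eq_zero.mp happ).2).resolve_left ?_
      simp only [ne_eq, tsub_eq_zero_iff_le, not_le]
      exact hp1
    have hdec' : μ.map gamInv = p • (μ₁.map gamInv) + (1 - p) • (μ₂.map gamInv) := by
      rw [hdec, Measure.map_add _ _ measurable_gamInv, Measure.map_smul, Measure.map_smul]
    have h1' := hext _ _ (TIS_P_map_gamInv h1 h1z) (TIS_P_map_gamInv h2 h2z) p hp0 hp1 hdec'
    have e1 : (μ₁.map gamInv).map gam = μ₁ := by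
      rw [Measure.map_map measurable_gam measurable_gamInv,
        show gam ∘ gamInv = id from funext gam_gamInv, Measure.map_id]
    rw [← e1, h1', hinv]

/-! #### Part (b) -/

/-- The set of stack configurations whose two one-sided Cesàro averages both converge to `c`. -/
def GS (c : ℝ) : Set XS :=
  {n | Tendsto (fun N : ℕ => (∑ i ∈ Finset.range N, (n ((i : ℤ) + 1) : ℝ)) / (N : ℝ))
      atTop (nhds c) ∧
    Tendsto (fun N : ℕ => (∑ i ∈ Finset.range N, (n (-(i : ℤ) - 1) : ℝ)) / (N : ℝ))
      atTop (nhds c)}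

/-- The set of parity sequences whose two one-sided Cesàro averages both converge to `c`. -/
def GF (c : ℝ) : Set PS :=
  {η | Tendsto (fun N : ℕ => (∑ i ∈ Finset.range N, (if η ((i : ℤ) + 1) then (1:ℝ) else 0)) /
      (N : ℝ)) atTop (nhds c) ∧
    Tendsto (fun N : ℕ => (∑ i ∈ Finset.range N, (if η (-(i : ℤ) - 1) then (1:ℝ) else 0)) /
      (N : ℝ)) atTop (nhds c)}

lemma measurable_coordR (j : ℤ) : Measurable fun n : XS => (n j : ℝ) :=
  by have := meas_discrete (measurable_pi_apply j : Measurable fun n : XS => n j) (fun k : ℕ => (k : ℝ)); exact this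

lemma measurable_coordB (j : ℤ) : Measurable fun η : PS => (if η j then (1:ℝ) else 0) :=
  by have := meas_discrete (measurable_pi_apply j : Measurable fun n : PS => n j) (fun b : Bool => if b then (1:ℝ) else 0); exact this

lemma measurableSet_GS (c : ℝ) : MeasurableSet (GS c) := by
  refine MeasurableSet.inter ?_ ?_
  · exact measurableSet_tendsto (nhds c) fun N =>
      (Finset.measurable_sum _ fun i _ => measurable_coordR _).div_const _
  · exact measurableSet_tendsto (nhds c) fun N =>
      (Finset.measurable_sum _ fun i _ => measurable_coordR _).div_const _

lemma measurableSet_GF (c : ℝ) : MeasurableSet (GF c) := by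
  refine MeasurableSet.inter ?_ ?_
  · exact measurableSet_tendsto (nhds c) fun N =>
      (Finset.measurable_sum _ fun i _ => measurable_coordB _).div_const _
  · exact measurableSet_tendsto (nhds c) fun N =>
      (Finset.measurable_sum _ fun i _ => measurable_coordB _).div_const _

lemma gam_cast (p : XS × PS) (j : ℤ) :
    (gam p j : ℝ) = (p.1 j : ℝ) + (if p.2 j then (1:ℝ) else 0) := by
  cases hb : p.2 j <;> simp [gam, hb]

lemma mem_GS_sub {p : XS × PS} {a b : ℝ} (h1 : gam p ∈ GS a) (h2 : p.2 ∈ GF b) :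
    p.1 ∈ GS (a - b) := by
  constructor
  · refine (h1.1.sub h2.1).congr fun N => ?_
    rw [div_sub_div_same, ← Finset.sum_sub_distrib]
    congr 1
    refine Finset.sum_congr rfl fun i _ => ?_
    rw [gam_cast]; ring
  · refine (h1.2.sub h2.2).congr fun N => ?_
    rw [div_sub_div_same, ← Finset.sum_sub_distrib]
    congr 1
    refine Finset.sum_congr rfl fun i _ => ?_
    rw [gam_cast]; ring

lemma partB (μt : Measure (XS × PS)) (ρ : ℝ) (hE : ETIS_P μt) (hdens : densS (μt.map gam) ρ) :
    ∃ (lam : Measure PS) (μσ : PS → Measure XS),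
      ErgF lam ∧ lam = μt.map Prod.snd ∧
      (∀ A : Set XS, MeasurableSet A → ∀ B : Set PS, MeasurableSet B →
        μt (A ×ˢ B) = ∫⁻ σ in B, μσ σ A ∂lam) ∧
      (∀ᵐ σ ∂lam, IsProbabilityMeasure (μσ σ) ∧ (μσ σ).bind QS = μσ σ ∧ (μσ σ) XeSᶜ = 0) ∧
      (∀ᵐ σ ∂lam, μσ (shf σ) = (μσ σ).map shs) ∧
      (∀ κ : ℝ, densF lam κ → ∀ᵐ σ ∂lam, densS (μσ σ) (ρ - κ)) := by
  obtain ⟨⟨hprob, hshift, hstat, hsupp⟩, hext⟩ := hE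
  haveI := hprob
  set ρm : Measure (PS × XS) := μt.map Prod.swap with hρm
  haveI : IsProbabilityMeasure ρm := Measure.isProbabilityMeasure_map measurable_swap.aemeasurable
  set lam : Measure PS := ρm.fst with hlam
  set κ : Kernel PS XS := ρm.condKernel with hκ
  haveI : IsProbabilityMeasure lam := by rw [hlam]; infer_instance
  have hdis : lam ⊗ₘ κ = ρm := ρm.disintegrate ρm.condKernel
  have hswap : ρm.map Prod.swap = μt := by
    rw [hρm, Measure.map_map measurable_swap measurable_swap,
      show (Prod.swap ∘ Prod.swap : XS × PS → XS × PS) = id from funext Prod.swap_swap,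
      Measure.map_id]
  have hfst : lam = μt.map Prod.snd := by
    rw [hlam, hρm]
    show (μt.map Prod.swap).map Prod.fst = μt.map Prod.snd
    rw [Measure.map_map measurable_fst measurable_swap]
    rfl
  -- shift invariance of ρm and lam
  have hQ : ρm.map shQ = ρm := by
    rw [hρm, Measure.map_map measurable_shQ measurable_swap, shQ_swap,
      ← Measure.map_map measurable_swap measurable_shP, hshift]
  have hQinv : ρm.map shQinv = ρm := by
    conv_lhs => rw [← hQ]
    rw [Measure.map_map measurable_shQinv measurable_shQ,
      show shQinv ∘ shQ = id from funext shQinv_shQ, Measure.map_id]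
  have hlam_shf : lam.map shf = lam := by
    have h1 : (ρm.map shQ).map Prod.fst = (ρm.map Prod.fst).map shf := by
      rw [Measure.map_map measurable_shf measurable_fst,
        Measure.map_map measurable_fst measurable_shQ]
      rfl
    rw [hlam]
    show (ρm.map Prod.fst).map shf = ρm.map Prod.fst
    rw [← h1, hQ]
  -- the rectangle property
  have hrect : ∀ A : Set XS, MeasurableSet A → ∀ B : Set PS, MeasurableSet B →
      μt (A ×ˢ B) = ∫⁻ σ in B, κ σ A ∂lam := by
    intro A hA B hB
    rw [← hswap, Measure.map_apply measurable_swap (hA.prod hB), Set.preimage_swap_prod,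
      ← hdis, Measure.compProd_apply_prod hB hA]
  -- a.e. support
  have hXe : ∀ᵐ σ ∂lam, κ σ XeSᶜ = 0 := by
    have h0 : ρm (Set.univ ×ˢ XeSᶜ) = 0 := by
      rw [hρm, Measure.map_apply measurable_swap
        (MeasurableSet.univ.prod measurableSet_XeS.compl)]
      exact measure_mono_null (fun p hp => hp.2) hsupp
    rw [← hdis, Measure.compProd_apply_prod MeasurableSet.univ measurableSet_XeS.compl,
      Measure.restrict_univ] at h0
    exact ((lintegral_eq_zero_iff (Kernel.measurable_coe κ measurableSet_XeS.compl)).mp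
      h0).mono fun σ h => by simpa using h
  -- a.e. stationarity of the conditional measures
  have hstatP : ρm = lam ⊗ₘ (QSK ∘ₖ κ) := by
    ext s hs
    have hco : Measurable fun p : XS × PS => QP p (Prod.swap ⁻¹' s) :=
      (Measure.measurable_coe (measurable_swap hs)).comp measurable_QP
    have hG : Measurable fun q : PS × XS => QP (Prod.swap q) (Prod.swap ⁻¹' s) :=
      hco.comp measurable_swap
    calc ρm s = μt (Prod.swap ⁻¹' s) := by rw [hρm, Measure.map_apply measurable_swap hs]
    _ = (μt.bind QP) (Prod.swap ⁻¹' s) := by rw [hstat]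
    _ = ∫⁻ p, QP p (Prod.swap ⁻¹' s) ∂μt := Measure.bind_apply (measurable_swap hs) measurable_QP.aemeasurable
    _ = ∫⁻ q, QP (Prod.swap q) (Prod.swap ⁻¹' s) ∂ρm := by
        rw [hρm, lintegral_map hG measurable_swap]
        exact lintegral_congr fun p => by rw [Prod.swap_swap]
    _ = ∫⁻ σ, ∫⁻ m, QP (Prod.swap (σ, m)) (Prod.swap ⁻¹' s) ∂κ σ ∂lam := by
        rw [← hdis, Measure.lintegral_compProd hG]
    _ = ∫⁻ σ, ((QSK ∘ₖ κ) σ) (Prod.mk σ ⁻¹' s) ∂lam := by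
        refine lintegral_congr fun σ => ?_
        rw [Kernel.comp_apply, Measure.bind_apply (measurable_prodMk_left hs) QSK.measurable.aemeasurable]
        refine lintegral_congr fun m => ?_
        show QP (m, σ) (Prod.swap ⁻¹' s) = QS m (Prod.mk σ ⁻¹' s)
        rw [QP, Measure.map_apply measurable_prodMk_right (measurable_swap hs)]
        rfl
    _ = (lam ⊗ₘ (QSK ∘ₖ κ)) s := (Measure.compProd_apply hs).symm
  have haeStat : ∀ᵐ σ ∂lam, (κ σ).bind QS = κ σ := by
    have h2 := eq_condKernel_of_measure_eq_compProd (QSK ∘ₖ κ) hstatP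
    refine h2.mono fun σ h => ?_
    conv_rhs => rw [← h]
    rw [Kernel.comp_apply]
    rfl
  -- a.e. equivariance of the conditional measures
  haveI : IsMarkovKernel (Kernel.map (κ.comap shf measurable_shf) shsInv) :=
    Kernel.IsMarkovKernel.map _ measurable_shsInv
  have hshiftP : ρm = lam ⊗ₘ (Kernel.map (κ.comap shf measurable_shf) shsInv) := by
    ext s hs
    have hsQ : MeasurableSet (shQinv ⁻¹' s) := measurable_shQinv hs
    have hH : Measurable fun σ' => κ σ' (Prod.mk σ' ⁻¹' (shQinv ⁻¹' s)) :=
      Kernel.measurable_kernel_prodMk_left hsQ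
    calc ρm s = ρm (shQinv ⁻¹' s) := by
          conv_lhs => rw [← hQinv]
          exact Measure.map_apply measurable_shQinv hs
    _ = (lam ⊗ₘ κ) (shQinv ⁻¹' s) := by rw [hdis]
    _ = ∫⁻ σ', κ σ' (Prod.mk σ' ⁻¹' (shQinv ⁻¹' s)) ∂lam := Measure.compProd_apply hsQ
    _ = ∫⁻ σ', κ σ' (Prod.mk σ' ⁻¹' (shQinv ⁻¹' s)) ∂(lam.map shf) := by rw [hlam_shf]
    _ = ∫⁻ σ, κ (shf σ) (Prod.mk (shf σ) ⁻¹' (shQinv ⁻¹' s)) ∂lam := lintegral_map hH measurable_shf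
    _ = ∫⁻ σ, (Kernel.map (κ.comap shf measurable_shf) shsInv) σ (Prod.mk σ ⁻¹' s) ∂lam := by
        refine lintegral_congr fun σ => ?_
        rw [Kernel.map_apply _ measurable_shsInv, Kernel.comap_apply,
          Measure.map_apply measurable_shsInv (measurable_prodMk_left hs)]
        congr 1
        ext m
        show (shfInv (shf σ), shsInv m) ∈ s ↔ (σ, shsInv m) ∈ s
        rw [shfInv_shf]
    _ = (lam ⊗ₘ (Kernel.map (κ.comap shf measurable_shf) shsInv)) s :=
        (Measure.compProd_apply hs).symm
  have haeEqv : ∀ᵐ σ ∂lam, κ (shf σ) = (κ σ).map shs := by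
    have h2 := eq_condKernel_of_measure_eq_compProd
      (Kernel.map (κ.comap shf measurable_shf) shsInv) hshiftP
    refine h2.mono fun σ h => ?_
    rw [Kernel.map_apply _ measurable_shsInv, Kernel.comap_apply] at h
    have h3 : ((κ (shf σ)).map shsInv).map shs = κ (shf σ) := by
      rw [Measure.map_map measurable_shs measurable_shsInv,
        show shs ∘ shsInv = id from funext shs_shsInv, Measure.map_id]
    rw [← h3, h]
  -- ergodicity of the marginal
  have herg : ErgF lam := by
    refine ⟨⟨inferInstance, hlam_shf⟩, ?_⟩
    intro l₁ l₂ hl₁ hl₂ p hp0 hp1 hdecomp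
    haveI := hl₁.1
    haveI := hl₂.1
    have hac : ∀ (lam' : Measure PS) (c : ℝ≥0∞), c ≠ 0 → (∃ lam'' : Measure PS,
        lam = c • lam' + lam'') → lam' ≪ lam := by
      rintro lam' c hc ⟨lam'', h''⟩
      refine Measure.AbsolutelyContinuous.mk fun s hsm hs0 => ?_
      have h0 : (c • lam' + lam'') s = 0 := by rw [← h'']; exact hs0
      rw [Measure.add_apply, Measure.smul_apply, smul_eq_mul] at h0
      exact (mul_eq_zero.mp (add_eq_zero.mp h0).1).resolve_left hc
    have hac1 : l₁ ≪ lam := hac l₁ p hp0.ne' ⟨(1 - p) • l₂, hdecomp⟩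
    have hac2 : l₂ ≪ lam := by
      refine hac l₂ (1 - p) ?_ ⟨p • l₁, by rw [hdecomp, add_comm]⟩
      simp only [ne_eq, tsub_eq_zero_iff_le, not_le]
      exact hp1
    -- the lifted decomposition
    have key : ∀ lam' : Measure PS, IsProbabilityMeasure lam' → lam'.map shf = lam' →
        lam' ≪ lam → TIS_P ((lam' ⊗ₘ κ).map Prod.swap) := by
      intro lam' hp' hshf' hacc
      haveI := hp'
      refine ⟨Measure.isProbabilityMeasure_map measurable_swap.aemeasurable, ?_, ?_, ?_⟩
      · -- shift invariance
        have hQ' : (lam' ⊗ₘ κ).map shQ = lam' ⊗ₘ κ := by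
          ext s hs
          have hsQ : MeasurableSet (shQ ⁻¹' s) := measurable_shQ hs
          have hH : Measurable fun σ' => κ σ' (Prod.mk σ' ⁻¹' s) :=
            Kernel.measurable_kernel_prodMk_left hs
          rw [Measure.map_apply measurable_shQ hs, Measure.compProd_apply hsQ,
            Measure.compProd_apply hs]
          have step : ∀ᵐ σ ∂lam', κ σ (Prod.mk σ ⁻¹' (shQ ⁻¹' s)) =
              (fun σ' => κ σ' (Prod.mk σ' ⁻¹' s)) (shf σ) := by
            refine (haeEqv.mono fun σ h => ?_).filter_mono hacc.ae_le
            show κ σ (Prod.mk σ ⁻¹' (shQ ⁻¹' s)) = κ (shf σ) (Prod.mk (shf σ) ⁻¹' s)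
            rw [h, Measure.map_apply measurable_shs (measurable_prodMk_left hs)]
            rfl
          rw [lintegral_congr_ae step, ← lintegral_map hH measurable_shf, hshf']
        rw [Measure.map_map measurable_shP measurable_swap,
          show shP ∘ Prod.swap = Prod.swap ∘ shQ from rfl,
          ← Measure.map_map measurable_swap measurable_shQ, hQ']
      · -- stationarity
        ext s hs
        have hco : Measurable fun p' : XS × PS => QP p' s :=
          (Measure.measurable_coe hs).comp measurable_QP
        have hG : Measurable fun q : PS × XS => QP (Prod.swap q) s := hco.comp measurable_swap
        rw [Measure.bind_apply hs measurable_QP.aemeasurable, lintegral_map hco measurable_swap,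
          Measure.lintegral_compProd hG]
        have inner : ∀ᵐ σ ∂lam', ∫⁻ m, QP (Prod.swap (σ, m)) s ∂κ σ =
            κ σ (Prod.mk σ ⁻¹' (Prod.swap ⁻¹' s)) := by
          refine (haeStat.mono fun σ h => ?_).filter_mono hacc.ae_le
          have e1 : ∀ m : XS, QP (Prod.swap (σ, m)) s = QS m (Prod.mk σ ⁻¹' (Prod.swap ⁻¹' s)) := by
            intro m
            show QP (m, σ) s = _
            rw [QP, Measure.map_apply measurable_prodMk_right hs]
            rfl
          rw [lintegral_congr e1,
            ← Measure.bind_apply (measurable_prodMk_left (measurable_swap hs)) measurable_QS.aemeasurable, h]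
        rw [lintegral_congr_ae inner, ← Measure.compProd_apply (measurable_swap hs),
          ← Measure.map_apply measurable_swap hs]
      · -- support
        rw [Measure.map_apply measurable_swap measurableSet_badP]
        have hset : Prod.swap ⁻¹' {p' : XS × PS | p'.1 ∉ XeS} =
            (Set.univ : Set PS) ×ˢ XeSᶜ := by
          ext q
          simp [Set.mem_prod]
        rw [hset, Measure.compProd_apply_prod MeasurableSet.univ measurableSet_XeS.compl,
          Measure.restrict_univ,
          lintegral_eq_zero_iff (Kernel.measurable_coe κ measurableSet_XeS.compl)]
        exact (hXe.mono fun σ h => by simpa using h).filter_mono hacc.ae_le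
    have hμteq : μt = (lam ⊗ₘ κ).map Prod.swap := by rw [hdis, hswap]
    have hcomb : μt = p • ((l₁ ⊗ₘ κ).map Prod.swap) + (1 - p) • ((l₂ ⊗ₘ κ).map Prod.swap) := by
      rw [hμteq, hdecomp, Measure.compProd_add_left, Measure.compProd_smul_left,
        Measure.compProd_smul_left, Measure.map_add _ _ measurable_swap,
        Measure.map_smul, Measure.map_smul]
    have h1 := hext _ _ (key l₁ hl₁.1 hl₁.2 hac1) (key l₂ hl₂.1 hl₂.2 hac2) p hp0 hp1 hcomb
    have h2 : ((l₁ ⊗ₘ κ).map Prod.swap).map Prod.snd = l₁ := by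
      rw [Measure.map_map measurable_snd measurable_swap,
        show (Prod.snd ∘ Prod.swap : PS × XS → PS) = Prod.fst from rfl]
      exact Measure.fst_compProd l₁ κ
    rw [← h2, h1, ← hfst]
  -- assemble
  refine ⟨lam, fun σ => κ σ, herg, hfst, hrect, ?_, haeEqv, ?_⟩
  · refine (haeStat.and hXe).mono fun σ h => ?_
    exact ⟨IsMarkovKernel.isProbabilityMeasure σ, h.1, h.2⟩
  · -- densities
    intro κ0 hκ0
    have h1 : ∀ᵐ p ∂μt, gam p ∈ GS ρ :=
      (ae_map_iff measurable_gam.aemeasurable (measurableSet_GS ρ)).mp hdens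
    have h2 : ∀ᵐ p ∂μt, p.2 ∈ GF κ0 := by
      have h0 : ∀ᵐ η ∂(μt.map Prod.snd), η ∈ GF κ0 := by rw [← hfst]; exact hκ0
      exact (ae_map_iff measurable_snd.aemeasurable (measurableSet_GF κ0)).mp h0
    have h3 : ∀ᵐ p ∂μt, p.1 ∈ GS (ρ - κ0) := by
      filter_upwards [h1, h2] with p hp1 hp2
      exact mem_GS_sub hp1 hp2
    have hbad : μt {p : XS × PS | p.1 ∉ GS (ρ - κ0)} = 0 := ae_iff.mp h3
    have h4 : ∀ᵐ σ ∂lam, κ σ (GS (ρ - κ0))ᶜ = 0 := by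
      have h0 : ρm (Set.univ ×ˢ (GS (ρ - κ0))ᶜ) = 0 := by
        rw [hρm, Measure.map_apply measurable_swap
          (MeasurableSet.univ.prod (measurableSet_GS _).compl)]
        exact measure_mono_null (fun p hp => hp.2) hbad
      rw [← hdis, Measure.compProd_apply_prod MeasurableSet.univ (measurableSet_GS _).compl,
        Measure.restrict_univ] at h0
      exact ((lintegral_eq_zero_iff (Kernel.measurable_coe κ
        (measurableSet_GS _).compl)).mp h0).mono fun σ h => by simpa using h
    exact h4.mono fun σ h => ae_iff.mpr h

end Aux14

/-- (a) `μ` on `X̂*` is an ETIS state of the SSM iff `γ⁻¹_* μ` is an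
ETIS state on `X̂*_e × S`.  (b) Every ETIS state `μ̃` on `X̂*_e × S` of density `ρ̂`
disintegrates as `μ̃(dn dσ) = μ_σ(dn) λ(dσ)` with `λ` ergodic TI, the `μ_σ` stationary,
equivariant (`μ_{τσ} = τ_* μ_σ`), and of density `ρ̂ - κ` when `λ` has density `κ`. -/
theorem parity_decomposition_of_ETIS :
    (∀ μ : Measure XS, μ XstarSᶜ = 0 → (ETIS_S μ ↔ ETIS_P (μ.map gamInv))) ∧
    (∀ (μt : Measure (XS × PS)) (ρ : ℝ), ETIS_P μt → densS (μt.map gam) ρ →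
      ∃ (lam : Measure PS) (μσ : PS → Measure XS),
        ErgF lam ∧ lam = μt.map Prod.snd ∧
        (∀ A : Set XS, MeasurableSet A → ∀ B : Set PS, MeasurableSet B →
          μt (A ×ˢ B) = ∫⁻ σ in B, μσ σ A ∂lam) ∧
        (∀ᵐ σ ∂lam, IsProbabilityMeasure (μσ σ) ∧ (μσ σ).bind QS = μσ σ ∧ (μσ σ) XeSᶜ = 0) ∧
        (∀ᵐ σ ∂lam, μσ (shf σ) = (μσ σ).map shs) ∧
        (∀ κ : ℝ, densF lam κ → ∀ᵐ σ ∂lam, densS (μσ σ) (ρ - κ))) :=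
  ⟨partA, partB⟩

end FSSEPPaper
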